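/- Let n ≥ 2 be an integer and A a finite set of size q ≥ 2 and let d_1, …, d_ℓ be the divisors of n different from 1. Then the group ICA(ℤ_n; A) of invertible cellular automata over ℤ_n and A is isomorphic to the direct product (ℤ_{d_1} ≀ Sym_{α(d_1,q)}) × ⋯ × (ℤ_{d_ℓ} ≀ Sym_{α(d_ℓ,q)}) × Sym_q, where α(d,q) is Moreau's necklace-counting function. -/

import Mathlib

set_option linter.unusedSectionVars false
set_option maxHeartbeats 1000000

/-- A permutation of coordinates, as a multiplicative automorphism of
`(ℤ_d)^α` (written multiplicatively): `(w^π)_i = w_{π⁻¹(i)}`. -/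
def permCoordAut (α : ℕ) (M : Type*) [Monoid M] (π : Equiv.Perm (Fin α)) :
    MulAut (Fin α → M) :=
  { Equiv.arrowCongr π (Equiv.refl M) with
    map_mul' := fun _ _ => rfl }

/-- The action of `Sym_α` on `(ℤ_d)^α` permuting the coordinates. -/
def wreathAct (d α : ℕ) : Equiv.Perm (Fin α) →* MulAut (Fin α → Multiplicative (ZMod d)) where
  toFun := permCoordAut α (Multiplicative (ZMod d))
  map_one' := by ext v; rfl
  map_mul' := fun π ρ => by ext v; rfl

/-- The generalized symmetric group `ℤ_d ≀ Sym_α = (ℤ_d)^α ⋊ Sym_α`, where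
`Sym_α` acts by permuting coordinates. -/
abbrev GenSym (d α : ℕ) :=
  SemidirectProduct (Fin α → Multiplicative (ZMod d)) (Equiv.Perm (Fin α)) (wreathAct d α)

open ArithmeticFunction in
/-- Moreau's necklace-counting function α(d,q) = (1/d) Σ_{b ∣ d} μ(d/b) q^b. -/
noncomputable def necklace (d q : ℕ) : ℕ :=
  ((∑ b ∈ d.divisors, (moebius (d / b) * (q : ℤ) ^ b)) / (d : ℤ)).toNat

/-- The cyclic shift `σ : A^n → A^n` as a permutation of `A^n`. -/
def shiftPerm (n : ℕ) (A : Type*) : Equiv.Perm (ZMod n → A) where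
  toFun x i := x (i - 1)
  invFun x i := x (i + 1)
  left_inv x := funext fun i => by simp
  right_inv x := funext fun i => by simp

/-- `ICA(ℤ_n;A) = CA(ℤ_n;A) ∩ Sym(A^n)`: the group of invertible cellular
automata, i.e. the centralizer of the shift in `Sym(A^n)`. -/
def ICAsub (n : ℕ) (A : Type*) : Subgroup (Equiv.Perm (ZMod n → A)) :=
  Subgroup.centralizer {shiftPerm n A}

section PartA

variable {I : Type*} (d m : I → ℕ)

/-- The standard permutation on `Σ i, Fin (m i) × ZMod (d i)`: add 1 in the last coord. -/
def stdPerm : Equiv.Perm (Σ i : I, Fin (m i) × ZMod (d i)) :=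
  Equiv.sigmaCongrRight fun i =>
    (Equiv.refl (Fin (m i))).prodCongr (Equiv.addRight (1 : ZMod (d i)))

@[simp] lemma stdPerm_apply (i : I) (j : Fin (m i)) (z : ZMod (d i)) :
    stdPerm d m ⟨i, (j, z)⟩ = ⟨i, (j, z + 1)⟩ := rfl

lemma stdPerm_pow (k : ℕ) (i : I) (j : Fin (m i)) (z : ZMod (d i)) :
    (stdPerm d m ^ k) ⟨i, (j, z)⟩ = ⟨i, (j, z + k)⟩ := by
  induction k with
  | zero => simp
  | succ k ih =>
      rw [pow_succ', Equiv.Perm.mul_apply, stdPerm_apply, ih]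
      push_cast
      rw [add_assoc]

/-- The skew permutation of `Fin α × ZMod d` associated to an element of `GenSym`. -/
def skewPerm {d α : ℕ} (g : GenSym d α) : Equiv.Perm (Fin α × ZMod d) where
  toFun p := (g.right p.1, p.2 + (g.left (g.right p.1)).toAdd)
  invFun p := (g.right.symm p.1, p.2 - (g.left p.1).toAdd)
  left_inv p := by simp
  right_inv p := by simp

lemma skewPerm_apply {d α : ℕ} (g : GenSym d α) (p : Fin α × ZMod d) :
    skewPerm g p = (g.right p.1, p.2 + (g.left (g.right p.1)).toAdd) := rfl

def skewHom (d α : ℕ) : GenSym d α →* Equiv.Perm (Fin α × ZMod d) where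
  toFun := skewPerm
  map_one' := by
    ext p
    · rfl
    · show p.2 + ((1 : GenSym d α).left _).toAdd = p.2
      simp
  map_mul' g h := by
    ext p
    · rfl
    · show p.2 + (((g*h).left ((g.right) ((h.right) p.1))).toAdd)
        = (p.2 + (h.left (h.right p.1)).toAdd) + (g.left (g.right (h.right p.1))).toAdd
      rw [SemidirectProduct.mul_left]
      show p.2 + ((g.left _).toAdd + ((wreathAct d α g.right h.left) _).toAdd) = _
      show p.2 + ((g.left _).toAdd + (h.left (g.right.symm (g.right (h.right p.1)))).toAdd) = _
      rw [Equiv.symm_apply_apply]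
      ring

lemma skewHom_injective {d α : ℕ} : Function.Injective (skewHom d α) := by
  intro g h hgh
  have h1 : ∀ p, skewPerm g p = skewPerm h p := fun p => congrFun (congrArg _ hgh) p
  have hr : g.right = h.right := by
    ext j
    exact congrArg Fin.val (congrArg Prod.fst (h1 (j, 0)))
  have hl : g.left = h.left := by
    funext a
    have := h1 (g.right.symm a, 0)
    rw [skewPerm_apply, skewPerm_apply, ← hr, Equiv.apply_symm_apply, Prod.mk.injEq] at this
    have := this.2
    simpa using this
  cases g; cases h
  simp_all [SemidirectProduct.ext_iff]

end PartA

def sigmaGet {I : Type*} {β : I → Type*} {i : I} (y : Σ i, β i) (h : y.1 = i) : β i := h ▸ y.2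

lemma sigmaGet_spec {I : Type*} {β : I → Type*} {i : I} (y : Σ i, β i) (h : y.1 = i) :
    y = ⟨i, sigmaGet y h⟩ := by cases y; cases h; rfl

section Centralizer

variable {I : Type*} [Finite I] (d m : I → ℕ)

/-- The embedding of `∀ i, GenSym (d i) (m i)` into the permutations of
`Σ i, Fin (m i) × ZMod (d i)`. -/
def stdHom : (∀ i, GenSym (d i) (m i)) →* Equiv.Perm (Σ i : I, Fin (m i) × ZMod (d i)) :=
  (Equiv.Perm.sigmaCongrRightHom (fun i => Fin (m i) × ZMod (d i))).comp
    { toFun := fun g i => skewHom (d i) (m i) (g i)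
      map_one' := by funext i; simp
      map_mul' := fun g h => by funext i; simp }

lemma stdHom_apply (g : ∀ i, GenSym (d i) (m i)) (i : I) (p : Fin (m i) × ZMod (d i)) :
    stdHom d m g ⟨i, p⟩ = ⟨i, skewPerm (g i) p⟩ := rfl

lemma stdHom_injective : Function.Injective (stdHom d m) := by
  intro g h hgh
  have := Equiv.Perm.sigmaCongrRightHom_injective hgh
  funext i
  exact skewHom_injective (congrFun this i)

theorem centralizer_eq_range (hd : ∀ i, 0 < d i) (hdinj : Function.Injective d) :
    Subgroup.centralizer {stdPerm d m} = (stdHom d m).range := by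
  have hfix : ∀ (x : Σ i : I, Fin (m i) × ZMod (d i)) (k : ℕ),
      (stdPerm d m ^ k) x = x ↔ d x.1 ∣ k := by
    rintro ⟨i, j, z⟩ k
    haveI : NeZero (d i) := ⟨(hd i).ne'⟩
    rw [stdPerm_pow]
    rw [Sigma.mk.inj_iff]
    simp only [heq_iff_eq, Prod.mk.injEq, true_and]
    rw [add_eq_left, ZMod.natCast_eq_zero_iff]
  apply le_antisymm
  · -- centralizer ≤ range
    intro τ hτ
    have hc : (stdPerm d m) * τ = τ * (stdPerm d m) :=
      Subgroup.mem_centralizer_iff.mp hτ _ (Set.mem_singleton _)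
    have hcomm : ∀ (k : ℕ) x, (stdPerm d m ^ k) (τ x) = τ ((stdPerm d m ^ k) x) := by
      intro k x
      have h2 : (stdPerm d m ^ k) * τ = τ * (stdPerm d m ^ k) := (Commute.pow_left hc k)
      calc (stdPerm d m ^ k) (τ x) = ((stdPerm d m ^ k) * τ) x := rfl
        _ = (τ * (stdPerm d m ^ k)) x := by rw [h2]
        _ = τ ((stdPerm d m ^ k) x) := rfl
    have hcomm' : ∀ (k : ℕ) x, (stdPerm d m ^ k) (τ⁻¹ x) = τ⁻¹ ((stdPerm d m ^ k) x) := by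
      intro k x
      have h2 : (stdPerm d m ^ k) * τ⁻¹ = τ⁻¹ * (stdPerm d m ^ k) :=
        ((Commute.pow_left hc k).inv_right)
      calc (stdPerm d m ^ k) (τ⁻¹ x) = ((stdPerm d m ^ k) * τ⁻¹) x := rfl
        _ = (τ⁻¹ * (stdPerm d m ^ k)) x := by rw [h2]
        _ = τ⁻¹ ((stdPerm d m ^ k) x) := rfl
    have hfst : ∀ x, (τ x).1 = x.1 := by
      intro x
      have h1 : d (τ x).1 ∣ d x.1 := by
        rw [← hfix (τ x) (d x.1), hcomm, (hfix x (d x.1)).mpr dvd_rfl]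
      have h2 : d x.1 ∣ d (τ x).1 := by
        have h3 : (stdPerm d m ^ (d (τ x).1)) (τ x) = τ x := (hfix (τ x) _).mpr dvd_rfl
        have h4 := congrArg (⇑τ⁻¹) h3
        rw [← hcomm' ] at h4
        simp only [Equiv.Perm.inv_def, Equiv.symm_apply_apply] at h4
        exact (hfix x _).mp h4
      exact hdinj (Nat.dvd_antisymm h1 h2)
    have hdet : ∀ (i : I) (j : Fin (m i)) (z : ZMod (d i)),
        τ ⟨i, (j, z)⟩ = (stdPerm d m ^ z.val) (τ ⟨i, (j, (0 : ZMod (d i)))⟩) := by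
      intro i j z
      haveI : NeZero (d i) := ⟨(hd i).ne'⟩
      have h1 : ((⟨i, (j, z)⟩ : Σ i : I, Fin (m i) × ZMod (d i))) =
          (stdPerm d m ^ z.val) ⟨i, (j, 0)⟩ := by
        rw [stdPerm_pow]
        simp [ZMod.natCast_val, ZMod.cast_id]
      rw [h1, hcomm]
    -- extract the data
    set t : ∀ i : I, Fin (m i) → Fin (m i) × ZMod (d i) :=
      fun i j => sigmaGet (β := fun i => Fin (m i) × ZMod (d i)) (τ ⟨i, (j, 0)⟩) (hfst _) with ht_def
    have ht : ∀ i j, τ ⟨i, (j, (0 : ZMod (d i)))⟩ = ⟨i, t i j⟩ :=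
      fun i j => sigmaGet_spec _ _
    have hπinj : ∀ i, Function.Injective (fun j => (t i j).1) := by
      intro i j j' hjj
      haveI : NeZero (d i) := ⟨(hd i).ne'⟩
      simp only at hjj
      -- τ ⟨i,(j',0)⟩ = std ^ c (τ ⟨i,(j,0)⟩) where c = ((t i j').2 - (t i j).2).val
      set c : ℕ := ((t i j').2 - (t i j).2).val with hc_def
      have key : τ ⟨i, (j', (0 : ZMod (d i)))⟩ = (stdPerm d m ^ c) (τ ⟨i, (j, (0 : ZMod (d i)))⟩) := by
        rw [ht, ht]
        have h5 : (t i j) = ((t i j).1, (t i j).2) := rfl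
        rw [h5, stdPerm_pow]
        rw [hc_def]
        simp only [ZMod.natCast_val, ZMod.cast_id]
        rw [add_sub_cancel]
        rw [hjj]
      rw [hcomm, stdPerm_pow] at key
      have := τ.injective key
      rw [Sigma.mk.inj_iff] at this
      simp only [heq_iff_eq, Prod.mk.injEq, true_and] at this
      exact this.1.symm
    have hπbij : ∀ i, Function.Bijective (fun j => (t i j).1) :=
      fun i => Finite.injective_iff_bijective.mp (hπinj i)
    set πe : ∀ i, Equiv.Perm (Fin (m i)) := fun i => Equiv.ofBijective _ (hπbij i) with hπe
    refine ⟨fun i => ⟨fun a => Multiplicative.ofAdd (t i ((πe i).symm a)).2, πe i⟩, ?_⟩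
    apply Equiv.ext
    rintro ⟨i, j, z⟩
    show stdHom d m _ ⟨i, (j, z)⟩ = τ ⟨i, (j, z)⟩
    haveI : NeZero (d i) := ⟨(hd i).ne'⟩
    rw [stdHom_apply, hdet, ht, skewPerm_apply]
    have h5 : (t i j) = ((t i j).1, (t i j).2) := rfl
    rw [h5, stdPerm_pow]
    show (⟨i, ((πe i) j, z + (t i ((πe i).symm ((πe i) j))).2)⟩ :
        Σ i : I, Fin (m i) × ZMod (d i)) = ⟨i, ((t i j).1, (t i j).2 + z.val)⟩
    rw [Equiv.symm_apply_apply]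
    have h6 : (πe i) j = (t i j).1 := rfl
    rw [h6]
    simp [ZMod.natCast_val, ZMod.cast_id, add_comm]
  · -- range ≤ centralizer
    rintro _ ⟨g, rfl⟩
    rw [Subgroup.mem_centralizer_iff]
    rintro h rfl
    apply Equiv.ext
    rintro ⟨i, j, z⟩
    show stdPerm d m (stdHom d m g ⟨i, (j, z)⟩) = stdHom d m g (stdPerm d m ⟨i, (j, z)⟩)
    rw [stdPerm_apply, stdHom_apply, stdHom_apply, skewPerm_apply, skewPerm_apply]
    show (⟨i, ((g i).right j, z + ((g i).left ((g i).right j)).toAdd + 1)⟩ :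
        Σ i : I, Fin (m i) × ZMod (d i)) = ⟨i, ((g i).right j, z + 1 + ((g i).left ((g i).right j)).toAdd)⟩
    have h7 : z + ((g i).left ((g i).right j)).toAdd + 1 = z + 1 + ((g i).left ((g i).right j)).toAdd := by ring
    rw [h7]

/-- The centralizer of the standard permutation is the product of generalized
symmetric groups. -/
noncomputable def centralizerMulEquiv (hd : ∀ i, 0 < d i) (hdinj : Function.Injective d) :
    Subgroup.centralizer {stdPerm d m} ≃* ∀ i, GenSym (d i) (m i) :=
  ((MonoidHom.ofInjective (stdHom_injective d m)).trans
    (MulEquiv.subgroupCongr (centralizer_eq_range d m hd hdinj).symm)).symm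

end Centralizer

section PartB

open Function Equiv

variable (n : ℕ) (A : Type*) [Fintype A]

lemma shiftPerm_pow_apply (k : ℕ) (x : ZMod n → A) (i : ZMod n) :
    ((shiftPerm n A ^ k) x) i = x (i - k) := by
  induction k generalizing x with
  | zero => simp
  | succ k ih =>
      rw [pow_succ, Equiv.Perm.mul_apply, ih]
      show x (i - k - 1) = x (i - (k + 1 : ℕ))
      push_cast
      ring_nf

lemma shiftPerm_pow_n : (shiftPerm n A) ^ n = 1 := by
  apply Equiv.ext
  intro x
  funext i
  show ((shiftPerm n A ^ n) x) i = x i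
  rw [shiftPerm_pow_apply]
  simp

/-- Minimal period of a configuration under the shift. -/
noncomputable def per (x : ZMod n → A) : ℕ := Function.minimalPeriod ⇑(shiftPerm n A) x

lemma isPt_iff (e : ℕ) (x : ZMod n → A) :
    IsPeriodicPt (⇑(shiftPerm n A)) e x ↔ (shiftPerm n A ^ e) x = x := by
  rw [Function.IsPeriodicPt, Function.IsFixedPt, Equiv.Perm.iterate_eq_pow]

lemma per_dvd_n (x : ZMod n → A) : per n A x ∣ n :=
  Function.IsPeriodicPt.minimalPeriod_dvd
    ((isPt_iff n A n x).mpr (by rw [shiftPerm_pow_n]; rfl))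

lemma per_pos (hn : 0 < n) (x : ZMod n → A) : 0 < per n A x :=
  Function.minimalPeriod_pos_of_mem_periodicPts
    ⟨n, hn, (isPt_iff n A n x).mpr (by rw [shiftPerm_pow_n]; rfl)⟩

lemma per_dvd_iff (e : ℕ) (x : ZMod n → A) :
    (shiftPerm n A ^ e) x = x ↔ per n A x ∣ e := by
  rw [← isPt_iff, Function.isPeriodicPt_iff_minimalPeriod_dvd]
  rfl

lemma pow_mod_per (a : ℕ) (x : ZMod n → A) :
    (shiftPerm n A ^ (a % per n A x)) x = (shiftPerm n A ^ a) x := by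
  have := Function.iterate_mod_minimalPeriod_eq (f := ⇑(shiftPerm n A)) (x := x) (n := a)
  rwa [Equiv.Perm.iterate_eq_pow, Equiv.Perm.iterate_eq_pow] at this

lemma sameCycle_per {x y : ZMod n → A} (h : (shiftPerm n A).SameCycle x y) :
    per n A x = per n A y := by
  obtain ⟨i, hi⟩ := h
  have key : ∀ e : ℕ, (shiftPerm n A ^ e) x = x ↔ (shiftPerm n A ^ e) y = y := by
    intro e
    have swap : ∀ z, (shiftPerm n A ^ e) ((shiftPerm n A ^ i) z)
        = (shiftPerm n A ^ i) ((shiftPerm n A ^ e) z) := by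
      intro z
      rw [← Equiv.Perm.mul_apply, ← Equiv.Perm.mul_apply,
        ((Commute.refl (shiftPerm n A)).pow_left e).zpow_right i]
    rw [← hi]
    constructor
    · intro h'
      rw [swap, h']
    · intro h'
      rw [swap] at h'
      exact (shiftPerm n A ^ i).injective h'
  have hy : (shiftPerm n A ^ per n A y) y = y := (per_dvd_iff _ _ _ _).mpr dvd_rfl
  have hx : (shiftPerm n A ^ per n A x) x = x := (per_dvd_iff _ _ _ _).mpr dvd_rfl
  have h1 : per n A x ∣ per n A y := (per_dvd_iff _ _ _ _).mp ((key _).mpr hy)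
  have h2 : per n A y ∣ per n A x := (per_dvd_iff _ _ _ _).mp ((key _).mp hx)
  exact Nat.dvd_antisymm h1 h2

/-- The setoid of shift orbits. -/
def shiftSetoid : Setoid (ZMod n → A) := Equiv.Perm.SameCycle.setoid (shiftPerm n A)

/-- The set of shift orbits. -/
def ShiftOrbits := Quotient (shiftSetoid n A)

noncomputable instance [NeZero n] : Finite (ShiftOrbits n A) :=
  Quotient.finite _

/-- The common period of the elements of an orbit. -/
noncomputable def perOrbit : ShiftOrbits n A → ℕ :=
  Quotient.lift (per n A) (fun _ _ h => sameCycle_per n A h)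

lemma perOrbit_mk (x : ZMod n → A) :
    perOrbit n A (Quotient.mk (shiftSetoid n A) x) = per n A x := rfl

lemma per_out (o : ShiftOrbits n A) : per n A o.out = perOrbit n A o := by
  conv_rhs => rw [← Quotient.out_eq o]
  rfl

/-- Orbits of period exactly `d`. -/
def OrbC (d : ℕ) := {o : ShiftOrbits n A // perOrbit n A o = d}

instance [NeZero n] (d : ℕ) : Finite (OrbC n A d) := Subtype.finite

lemma pow_per_inj {x : ZMod n → A} {d a b : ℕ} (hx : per n A x = d)
    (ha : a < d) (hb : b < d) (h : (shiftPerm n A ^ a) x = (shiftPerm n A ^ b) x) :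
    a = b := by
  have aux : ∀ a b : ℕ, a ≤ b → b < d →
      (shiftPerm n A ^ a) x = (shiftPerm n A ^ b) x → a = b := by
    intro a b hab hbd h
    have hb' : (shiftPerm n A ^ b) x = (shiftPerm n A ^ (b - a)) ((shiftPerm n A ^ a) x) := by
      rw [← Equiv.Perm.mul_apply, ← pow_add, Nat.sub_add_cancel hab]
    have h2 : (shiftPerm n A ^ (b - a)) ((shiftPerm n A ^ a) x) = (shiftPerm n A ^ a) x := by
      rw [← hb', ← h]
    have hsc : per n A ((shiftPerm n A ^ a) x) = d := by
      rw [← hx]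
      exact (sameCycle_per n A ⟨(a : ℤ), by rw [zpow_natCast]⟩).symm
    rw [per_dvd_iff, hsc] at h2
    have : b - a = 0 := Nat.eq_zero_of_dvd_of_lt h2 (lt_of_le_of_lt (Nat.sub_le b a) hbd)
    omega
  rcases le_total a b with hab | hab
  · exact aux a b hab hb h
  · exact (aux b a hab ha h.symm).symm

/-- The map realizing each period-`d` class as `OrbC d × ZMod d`. -/
noncomputable def Wmap (d : ℕ) :
    OrbC n A d × ZMod d → {x : ZMod n → A // per n A x = d} :=
  fun p => ⟨(shiftPerm n A ^ p.2.val) p.1.1.out, by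
    rw [← (sameCycle_per n A ⟨(p.2.val : ℤ), by rw [zpow_natCast]⟩ :
      per n A p.1.1.out = per n A ((shiftPerm n A ^ p.2.val) p.1.1.out))]
    rw [per_out]
    exact p.1.2⟩

lemma Wmap_bijective (d : ℕ) (hd : 0 < d) : Function.Bijective (Wmap n A d) := by
  haveI : NeZero d := ⟨hd.ne'⟩
  constructor
  · rintro ⟨⟨o, ho⟩, z⟩ ⟨⟨o', ho'⟩, z'⟩ h
    simp only [Wmap, Subtype.mk.injEq] at h
    have hsc : (shiftPerm n A).SameCycle o.out o'.out := by
      have s1 : (shiftPerm n A).SameCycle o.out ((shiftPerm n A ^ z.val) o.out) :=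
        ⟨(z.val : ℤ), by rw [zpow_natCast]⟩
      have s2 : (shiftPerm n A).SameCycle o'.out ((shiftPerm n A ^ z'.val) o'.out) :=
        ⟨(z'.val : ℤ), by rw [zpow_natCast]⟩
      exact s1.trans (h ▸ s2.symm)
    have hoo : o = o' := by
      rw [← Quotient.out_eq o, ← Quotient.out_eq o']
      exact Quotient.sound hsc
    subst hoo
    have hper : per n A o.out = d := (per_out n A o).trans ho
    have : z.val = z'.val :=
      pow_per_inj n A hper (ZMod.val_lt z) (ZMod.val_lt z') h
    have hz : z = z' := ZMod.val_injective d this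
    subst hz
    rfl
  · rintro ⟨x, hx⟩
    set o : ShiftOrbits n A := Quotient.mk (shiftSetoid n A) x with ho_def
    have hsc : (shiftPerm n A).SameCycle o.out x := Quotient.exact (Quotient.out_eq o)
    obtain ⟨i, hi⟩ := hsc
    have hper : per n A o.out = d := by
      rw [per_out]; exact hx
    set k : ℕ := (i % (d : ℤ)).toNat with hk_def
    have hk_lt : k < d := by
      have h1 : i % (d : ℤ) < d := Int.emod_lt_of_pos i (by exact_mod_cast hd)
      omega
    have hfix : (shiftPerm n A ^ ((d : ℕ) : ℤ)) o.out = o.out := by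
      rw [zpow_natCast]
      exact (per_dvd_iff n A d o.out).mpr (hper ▸ dvd_rfl)
    have hpow : (shiftPerm n A ^ k) o.out = x := by
      have h2 : (i % (d : ℤ)) = (k : ℤ) := by
        rw [hk_def, Int.toNat_of_nonneg (Int.emod_nonneg i (by exact_mod_cast hd.ne'))]
      have h3 : (shiftPerm n A ^ i) o.out = (shiftPerm n A ^ (i % (d : ℤ))) o.out := by
        conv_lhs => rw [← Int.emod_add_mul_ediv i (d : ℤ)]
        rw [zpow_add, Equiv.Perm.mul_apply, zpow_mul]
        rw [Equiv.Perm.zpow_apply_eq_self_of_apply_eq_self hfix]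
      rw [← hi, h3, h2, zpow_natCast]
    refine ⟨⟨⟨o, by rw [← hx, ho_def]; rfl⟩, (k : ZMod d)⟩, ?_⟩
    apply Subtype.ext
    show (shiftPerm n A ^ (((k : ZMod d)).val)) o.out = x
    rw [ZMod.val_natCast, Nat.mod_eq_of_lt hk_lt, hpow]

lemma Wmap_shift (d : ℕ) (hd : 0 < d) (o : OrbC n A d) (z : ZMod d) :
    (Wmap n A d (o, z + 1)).1 = shiftPerm n A ((Wmap n A d (o, z)).1) := by
  haveI : NeZero d := ⟨hd.ne'⟩
  show (shiftPerm n A ^ ((z + 1).val)) o.1.out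
      = shiftPerm n A ((shiftPerm n A ^ z.val) o.1.out)
  have h1 : shiftPerm n A ((shiftPerm n A ^ z.val) o.1.out)
      = (shiftPerm n A ^ (z.val + 1)) o.1.out := by
    rw [pow_succ', Equiv.Perm.mul_apply]
  rw [h1]
  have hper : per n A o.1.out = d := (per_out n A o.1).trans o.2
  have h2 : (z + 1).val = (z.val + 1) % d := by
    rw [ZMod.val_add, ZMod.val_one_eq_one_mod]
    conv_rhs => rw [Nat.add_mod]
    rw [Nat.mod_eq_of_lt (ZMod.val_lt z)]
  have h3 := pow_mod_per n A (z.val + 1) o.1.out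
  rw [hper] at h3
  rw [h2, h3]

lemma periodic_nat (e : ℕ) (x : ZMod n → A) (hx : (shiftPerm n A ^ e) x = x)
    (a b : ℕ) : x (((a + e * b : ℕ) : ZMod n)) = x ((a : ZMod n)) := by
  induction b with
  | zero => simp
  | succ b ih =>
      have hstep : ∀ i : ZMod n, x (i + e) = x i := by
        intro i
        have h0 := congrFun hx (i + (e : ZMod n))
        rw [shiftPerm_pow_apply, add_sub_cancel_right] at h0
        exact h0.symm
      have : ((a + e * (b+1) : ℕ) : ZMod n) = ((a + e * b : ℕ) : ZMod n) + e := by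
        push_cast
        ring
      rw [this, hstep, ih]

/-- Configurations fixed by `σ^e` are functions on `ZMod e`. -/
noncomputable def periodicEquiv (e : ℕ) (he : e ∣ n) [NeZero n] [NeZero e] :
    {x : ZMod n → A // (shiftPerm n A ^ e) x = x} ≃ (ZMod e → A) where
  toFun x := fun j => x.1 ((j.val : ZMod n))
  invFun y := ⟨fun i => y (ZMod.castHom he (ZMod e) i), by
    funext i
    rw [shiftPerm_pow_apply]
    show y (ZMod.castHom he (ZMod e) (i - e)) = y (ZMod.castHom he (ZMod e) i)
    rw [map_sub, map_natCast, ZMod.natCast_self, sub_zero]⟩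
  left_inv := by
    rintro ⟨x, hx⟩
    apply Subtype.ext
    funext i
    show x ((((ZMod.castHom he (ZMod e)) i).val : ZMod n)) = x i
    have h1 : (ZMod.castHom he (ZMod e)) i = ((i.val : ℕ) : ZMod e) := by
      rw [ZMod.castHom_apply, ← ZMod.natCast_val]
    rw [h1, ZMod.val_natCast]
    have h2 := periodic_nat n A e x hx (i.val % e) (i.val / e)
    rw [Nat.mod_add_div] at h2
    rw [← h2]
    congr 1
    simp [ZMod.natCast_val, ZMod.cast_id]
  right_inv := by
    intro y
    funext j
    show y ((ZMod.castHom he (ZMod e)) (((j.val : ℕ) : ZMod n))) = y j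
    rw [map_natCast]
    congr 1
    simp [ZMod.natCast_val, ZMod.cast_id]

lemma card_fixed (e : ℕ) (he : e ∈ n.divisors) [NeZero n] :
    Nat.card {x : ZMod n → A // (shiftPerm n A ^ e) x = x} = (Fintype.card A) ^ e := by
  haveI : NeZero e := ⟨(Nat.pos_of_mem_divisors he).ne'⟩
  rw [Nat.card_congr (periodicEquiv n A e (Nat.dvd_of_mem_divisors he)), Nat.card_fun,
    Nat.card_zmod, Nat.card_eq_fintype_card]

lemma sum_F (e : ℕ) (he : e ∈ n.divisors) [NeZero n] :
    ∑ d ∈ e.divisors, Nat.card {x : ZMod n → A // per n A x = d}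
      = (Fintype.card A) ^ e := by
  classical
  rw [← card_fixed n A e he]
  have h1 : Nat.card {x : ZMod n → A // (shiftPerm n A ^ e) x = x}
      = Nat.card {x : ZMod n → A // per n A x ∣ e} :=
    Nat.card_congr (Equiv.subtypeEquivRight (fun x => per_dvd_iff n A e x))
  rw [h1]
  rw [Nat.card_eq_fintype_card, Fintype.card_subtype]
  rw [Finset.card_eq_sum_card_fiberwise
    (f := per n A) (t := e.divisors)
    (fun x hx => Nat.mem_divisors.mpr
      ⟨(Finset.mem_filter.mp hx).2, (Nat.pos_of_mem_divisors he).ne'⟩)]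
  apply Finset.sum_congr rfl
  intro d hd
  rw [Nat.card_eq_fintype_card, Fintype.card_subtype]
  congr 1
  ext x
  simp only [Finset.mem_filter, Finset.mem_univ, true_and]
  constructor
  · intro h; exact ⟨h ▸ Nat.dvd_of_mem_divisors hd, h⟩
  · exact fun h => h.2

lemma F_eq (d : ℕ) (hd : 0 < d) :
    (Nat.card {x : ZMod n → A // per n A x = d} : ℤ)
      = d * Nat.card (OrbC n A d) := by
  rw [← Nat.card_congr (Equiv.ofBijective _ (Wmap_bijective n A d hd)), Nat.card_prod,
    Nat.card_zmod]
  push_cast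
  ring

open ArithmeticFunction in
lemma card_orbC (q : ℕ) (hq : Fintype.card A = q) (hn : n ≠ 0) (d : ℕ) (hd : d ∈ n.divisors) :
    Nat.card (OrbC n A d)
      = ((∑ b ∈ d.divisors, (moebius (d / b) * (q : ℤ) ^ b)) / (d : ℤ)).toNat := by
  haveI : NeZero n := ⟨hn⟩
  have hmoeb := (ArithmeticFunction.sum_eq_iff_sum_mul_moebius_eq_on (R := ℤ)
    (f := fun d => (Nat.card {x : ZMod n → A // per n A x = d} : ℤ))
    (g := fun e => (q : ℤ) ^ e) {e : ℕ | e ∈ n.divisors}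
    (fun m e hme he => Nat.mem_divisors.mpr ⟨hme.trans (Nat.dvd_of_mem_divisors he), hn⟩)).mp
    (fun e _ he => by
      rw [← hq]
      exact_mod_cast congrArg (Nat.cast (R := ℤ)) (sum_F n A e he))
    d (Nat.pos_of_mem_divisors hd) hd
  simp only [Int.cast_id] at hmoeb
  have h2 : ∑ b ∈ d.divisors, (moebius (d / b) * (q : ℤ) ^ b)
      = ∑ x ∈ d.divisorsAntidiagonal, (moebius x.1 : ℤ) * (q : ℤ) ^ x.2 := by
    rw [← Nat.sum_divisorsAntidiagonal' (f := fun a b => (moebius a : ℤ) * (q : ℤ) ^ b)]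
  rw [h2, hmoeb, F_eq n A d (Nat.pos_of_mem_divisors hd)]
  rw [Int.mul_ediv_cancel_left _ (by exact_mod_cast (Nat.pos_of_mem_divisors hd).ne')]
  simp

end PartB

section Glue

/-- `Equiv.permCongr` as a `MulEquiv`. -/
def permCongrMul {X Y : Type*} (e : X ≃ Y) : Equiv.Perm X ≃* Equiv.Perm Y :=
  { Equiv.permCongr e with
    map_mul' := fun p q => by
      apply Equiv.ext
      intro y
      simp [Equiv.permCongr_apply, Equiv.Perm.mul_apply] }

lemma permCongrMul_apply {X Y : Type*} (e : X ≃ Y) (p : Equiv.Perm X) :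
    permCongrMul e p = e.permCongr p := rfl

lemma map_centralizer_singleton {G H : Type*} [Group G] [Group H] (e : G ≃* H) (a : G) :
    (Subgroup.centralizer {a}).map e.toMonoidHom = Subgroup.centralizer {e a} := by
  ext g
  simp only [Subgroup.mem_map, Subgroup.mem_centralizer_iff, Set.mem_singleton_iff]
  constructor
  · rintro ⟨h, hh, rfl⟩
    rintro b rfl
    show e a * e h = e h * e a
    rw [← map_mul, ← map_mul, hh a rfl]
  · intro hg
    have key : a * e.symm g = e.symm g * a := by
      apply e.injective
      rw [map_mul, map_mul, e.apply_symm_apply]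
      exact hg (e a) rfl
    exact ⟨e.symm g, fun b hb => hb ▸ key, e.apply_symm_apply g⟩

/-- Splitting a product of groups along a decidable predicate. -/
def piSplitMulEquiv {ι : Type*} (p : ι → Prop) [DecidablePred p] (G : ι → Type*)
    [∀ i, Monoid (G i)] :
    (∀ i, G i) ≃* (∀ i : {x // p x}, G i) × (∀ i : {x // ¬ p x}, G i) :=
  { Equiv.piEquivPiSubtypeProd p G with map_mul' := fun f g => rfl }

end Glue


section Assembly

open Equiv

variable (n : ℕ) (A : Type*) [Fintype A]

/-- The index type: divisors of `n`. -/
abbrev DivI (n : ℕ) := {d : ℕ // d ∈ n.divisors}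

noncomputable def classifyEquiv [NeZero n]
    (eo : ∀ dd : DivI n, OrbC n A dd.1 ≃ Fin (necklace dd.1 (Fintype.card A))) :
    (ZMod n → A) ≃ Σ dd : DivI n, Fin (necklace dd.1 (Fintype.card A)) × ZMod dd.1 :=
  (Equiv.sigmaFiberEquiv (fun x : ZMod n → A =>
      (⟨per n A x, Nat.mem_divisors.mpr ⟨per_dvd_n n A x, NeZero.ne n⟩⟩ : DivI n))).symm.trans
    (Equiv.sigmaCongrRight fun dd =>
      ((Equiv.subtypeEquivRight (fun x => Subtype.ext_iff)).trans
        (Equiv.ofBijective _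
          (Wmap_bijective n A dd.1 (Nat.pos_of_mem_divisors dd.2))).symm).trans
      (Equiv.prodCongr (eo dd) (Equiv.refl (ZMod dd.1))))

lemma classifyEquiv_symm_apply [NeZero n]
    (eo : ∀ dd : DivI n, OrbC n A dd.1 ≃ Fin (necklace dd.1 (Fintype.card A)))
    (dd : DivI n) (j : Fin (necklace dd.1 (Fintype.card A))) (z : ZMod dd.1) :
    (classifyEquiv n A eo).symm ⟨dd, (j, z)⟩
      = (shiftPerm n A ^ z.val) (Quotient.out (((eo dd).symm j : OrbC n A dd.1)).1) := rfl

lemma classify_intertwine [NeZero n]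
    (eo : ∀ dd : DivI n, OrbC n A dd.1 ≃ Fin (necklace dd.1 (Fintype.card A)))
    (x : ZMod n → A) :
    classifyEquiv n A eo (shiftPerm n A x)
      = stdPerm (fun dd : DivI n => dd.1)
          (fun dd : DivI n => necklace dd.1 (Fintype.card A))
          (classifyEquiv n A eo x) := by
  rcases hEx : classifyEquiv n A eo x with ⟨dd, j, z⟩
  have hx : x = (classifyEquiv n A eo).symm ⟨dd, (j, z)⟩ := by
    rw [← hEx, Equiv.symm_apply_apply]
  rw [stdPerm_apply, Equiv.apply_eq_iff_eq_symm_apply, hx,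
    classifyEquiv_symm_apply, classifyEquiv_symm_apply]
  exact (Wmap_shift n A dd.1 (Nat.pos_of_mem_divisors dd.2) ((eo dd).symm j) z).symm

/-- `GenSym 1 α` is just the symmetric group. -/
noncomputable def genSymOne (α : ℕ) : GenSym 1 α ≃* Equiv.Perm (Fin α) :=
  MulEquiv.ofBijective SemidirectProduct.rightHom
    ⟨by
      intro a b hab
      have h1 : a.right = b.right := hab
      have h2 : a.left = b.left := Subsingleton.elim _ _
      cases a; cases b
      cases h1; cases h2; rfl,
     fun h => ⟨SemidirectProduct.inr h, SemidirectProduct.rightHom_inr h⟩⟩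

open ArithmeticFunction in
lemma necklace_one (q : ℕ) : necklace 1 q = q := by
  rw [necklace, Nat.divisors_one]
  simp

end Assembly

/-- Let n ≥ 2 and A a finite set of size q ≥ 2.  Then ICA(ℤ_n;A) is isomorphic
to the direct product of the generalized symmetric groups ℤ_d ≀ Sym_{α(d,q)},
over the divisors d ≠ 1 of n, with Sym_q. -/
theorem ICA_iso (n : ℕ) (hn : 2 ≤ n) (A : Type*) [Fintype A] (q : ℕ)
    (hq : Fintype.card A = q) (hq2 : 2 ≤ q) :
    Nonempty (↥(ICAsub n A) ≃*
      ((∀ d : {d : ℕ // d ∈ n.divisors ∧ d ≠ 1}, GenSym d.1 (necklace d.1 q)) ×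
        Equiv.Perm (Fin q))) := by
  subst hq
  haveI : NeZero n := ⟨by omega⟩
  have hcard : ∀ dd : DivI n, Nat.card (OrbC n A dd.1)
      = necklace dd.1 (Fintype.card A) := by
    intro dd
    rw [card_orbC n A (Fintype.card A) rfl (NeZero.ne n) dd.1 dd.2]
    rfl
  have eo : ∀ dd : DivI n, OrbC n A dd.1 ≃ Fin (necklace dd.1 (Fintype.card A)) := by
    intro dd
    haveI : Fintype (OrbC n A dd.1) := Fintype.ofFinite _
    exact Fintype.equivFinOfCardEq (by rw [← Nat.card_eq_fintype_card, hcard])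
  set E := classifyEquiv n A eo with hE
  -- Step 1: conjugate the centralizer of the shift to the standard one
  have hstd : permCongrMul E (shiftPerm n A)
      = stdPerm (fun dd : DivI n => dd.1)
          (fun dd : DivI n => necklace dd.1 (Fintype.card A)) := by
    apply Equiv.ext
    intro zz
    rw [permCongrMul_apply, Equiv.permCongr_apply]
    rw [classify_intertwine n A eo (E.symm zz), Equiv.apply_symm_apply]
  have hmap : (ICAsub n A).map (permCongrMul E).toMonoidHom
      = Subgroup.centralizer {stdPerm (fun dd : DivI n => dd.1)
          (fun dd : DivI n => necklace dd.1 (Fintype.card A))} := by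
    rw [ICAsub, map_centralizer_singleton, hstd]
  have iso1 : ↥(ICAsub n A) ≃*
      ↥(Subgroup.centralizer {stdPerm (fun dd : DivI n => dd.1)
          (fun dd : DivI n => necklace dd.1 (Fintype.card A))}) :=
    (MulEquiv.subgroupMap (permCongrMul E) (ICAsub n A)).trans
      (MulEquiv.subgroupCongr hmap)
  -- Step 2: the centralizer of the standard permutation
  have iso2 : ↥(Subgroup.centralizer {stdPerm (fun dd : DivI n => dd.1)
          (fun dd : DivI n => necklace dd.1 (Fintype.card A))}) ≃*
      ∀ dd : DivI n, GenSym dd.1 (necklace dd.1 (Fintype.card A)) :=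
    centralizerMulEquiv _ _ (fun dd => Nat.pos_of_mem_divisors dd.2) Subtype.coe_injective
  -- Step 3: split off the divisor 1
  have iso3 : (∀ dd : DivI n, GenSym dd.1 (necklace dd.1 (Fintype.card A))) ≃*
      ((∀ dd : {x : DivI n // x.1 ≠ 1}, GenSym dd.1.1 (necklace dd.1.1 (Fintype.card A))) ×
       (∀ dd : {x : DivI n // ¬ x.1 ≠ 1}, GenSym dd.1.1 (necklace dd.1.1 (Fintype.card A)))) :=
    piSplitMulEquiv (fun dd : DivI n => dd.1 ≠ 1) _
  -- first factor: reindex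
  have iso4 : (∀ dd : {x : DivI n // x.1 ≠ 1},
        GenSym dd.1.1 (necklace dd.1.1 (Fintype.card A))) ≃*
      (∀ d : {d : ℕ // d ∈ n.divisors ∧ d ≠ 1},
        GenSym d.1 (necklace d.1 (Fintype.card A))) :=
    { toFun := fun f d => f ⟨⟨d.1, d.2.1⟩, d.2.2⟩
      invFun := fun g dd => g ⟨dd.1.1, dd.1.2, dd.2⟩
      left_inv := fun f => rfl
      right_inv := fun g => rfl
      map_mul' := fun f g => rfl }
  -- second factor: the unique divisor 1
  letI hu : Unique {x : DivI n // ¬ x.1 ≠ 1} :=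
    { default := ⟨⟨1, Nat.one_mem_divisors.mpr (NeZero.ne n)⟩, by simp⟩
      uniq := fun a => Subtype.ext (Subtype.ext (not_not.mp a.2)) }
  have iso5 : (∀ dd : {x : DivI n // ¬ x.1 ≠ 1},
        GenSym dd.1.1 (necklace dd.1.1 (Fintype.card A))) ≃*
      Equiv.Perm (Fin (Fintype.card A)) :=
    (MulEquiv.piUnique _).trans ((genSymOne _).trans
      (permCongrMul (finCongr (necklace_one (Fintype.card A)))))
  exact ⟨(iso1.trans iso2).trans ((iso3.trans (MulEquiv.prodCongr iso4 iso5)))⟩
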